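/- Let 0 < ν < 1, let ρ ∈ (0,1), and let κ > 0. There exists a constant C = C(ν) such that for every v ∈ ℝ³ with |v| ≤ ν, every 0 < σ < κ' ≤ κ, every s > 0, every x ∈ ℝ³ with |x| ≤ (1 − ρ) s, and every component index l ∈ {1,2,3}, one has |∫_{A(σ,κ')} (Σ_v(k))_l · cos(k·x − |k| s) dk| ≤ C / (ρ s); in particular the bound is uniform in the cutoffs σ and κ'. -/

import Mathlib

open MeasureTheory
open scoped RealInnerProductSpace

noncomputable section

/-- ℝ³ as a Euclidean space. -/
abbrev E3 := EuclideanSpace ℝ (Fin 3)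

/-- The closed annulus `{k : a ≤ |k| ≤ b}` in ℝ³. -/
def annulus (a b : ℝ) : Set E3 := {k | a ≤ ‖k‖ ∧ ‖k‖ ≤ b}

/-- The soft-photon velocity field
`Σ_v(k) = (2 / (|k|² (1 − (k/|k|)·v))) • (v − ((k·v)/|k|²) k)`. -/
def Sig (v k : E3) : E3 :=
  (2 / (‖k‖ ^ 2 * (1 - ⟪k, v⟫ / ‖k‖))) • (v - (⟪k, v⟫ / ‖k‖ ^ 2) • k)
lemma abs_coord_le (w : E3) (l : Fin 3) : |w l| ≤ ‖w‖ := by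
  rw [EuclideanSpace.norm_eq, ← Real.sqrt_sq_eq_abs]
  apply Real.sqrt_le_sqrt
  have h : ‖w l‖ ^ 2 = w l ^ 2 := by rw [Real.norm_eq_abs, sq_abs]
  rw [← h]
  exact Finset.single_le_sum (f := fun i => ‖w i‖ ^ 2) (fun i _ => sq_nonneg _)
    (Finset.mem_univ l)

lemma Sig_meas (v : E3) : Measurable (Sig v) := by
  unfold Sig
  have h1 : Measurable fun k : E3 => ⟪k, v⟫ := (continuous_id.inner continuous_const).measurable
  have h2 : Measurable fun k : E3 => ‖k‖ := continuous_norm.measurable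
  exact ((measurable_const.div ((h2.pow_const 2).mul
      (measurable_const.sub (h1.div h2)))).smul
    (measurable_const.sub ((h1.div (h2.pow_const 2)).smul measurable_id)))

lemma Sig_smul (v ω : E3) (hω : ‖ω‖ = 1) {r : ℝ} (hr : 0 < r) :
    Sig v (r • ω) = r⁻¹ ^ 2 • Sig v ω := by
  have hr' : r ≠ 0 := ne_of_gt hr
  have hrt : r * ⟪ω, v⟫ / (r * 1) = ⟪ω, v⟫ / 1 := by
    rw [mul_one, mul_comm, mul_div_assoc, div_self hr', mul_one, div_one]
  unfold Sig
  rw [norm_smul, real_inner_smul_left, hω, Real.norm_eq_abs, abs_of_pos hr, hrt]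
  by_cases ht : 1 - ⟪ω, v⟫ / 1 = 0
  · rw [ht, mul_zero, div_zero, zero_smul]
    simp
  · rw [div_one] at ht
    have hsum : ⟪ω, v⟫ = ∑ i : Fin 3, ω i * v i := by
      simp [PiLp.inner_apply]
      exact Finset.sum_congr rfl fun i _ => mul_comm _ _
    rw [hsum] at ht
    have h2 : r ^ 2 - r ^ 2 * (∑ i : Fin 3, ω i * v i) ≠ 0 := by
      rw [show r ^ 2 - r ^ 2 * (∑ i : Fin 3, ω i * v i)
          = r ^ 2 * (1 - ∑ i : Fin 3, ω i * v i) from by ring]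
      exact mul_ne_zero (pow_ne_zero 2 hr') ht
    match_scalars
    · field_simp [ht]
    · field_simp [ht]

lemma Sig_norm_le {ν : ℝ} (hν1 : ν < 1) (v : E3) (hv : ‖v‖ ≤ ν) (ω : E3) (hω : ‖ω‖ = 1) :
    ‖Sig v ω‖ ≤ 4 / (1 - ν) := by
  have hν0 : (0:ℝ) ≤ ν := le_trans (norm_nonneg v) hv
  have hiν : ⟪ω, v⟫ ≤ ν := by
    calc ⟪ω, v⟫ ≤ ‖ω‖ * ‖v‖ := real_inner_le_norm ω v
    _ = ‖v‖ := by rw [hω, one_mul]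
    _ ≤ ν := hv
  have habs : |⟪ω, v⟫| ≤ ν := by
    have := abs_real_inner_le_norm ω v
    rw [hω, one_mul] at this
    exact this.trans hv
  have hd : (0:ℝ) < 1 - ν := by linarith
  have hd' : (0:ℝ) < 1 - ⟪ω, v⟫ := by linarith
  unfold Sig
  rw [norm_smul, hω]
  have h1 : ‖(2 / ((1:ℝ) ^ 2 * (1 - ⟪ω, v⟫ / 1)))‖ ≤ 2 / (1 - ν) := by
    rw [one_pow, one_mul, div_one, Real.norm_eq_abs, abs_of_pos (by positivity)]
    exact div_le_div_of_nonneg_left (by norm_num) hd (by linarith)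
  have h2 : ‖v - (⟪ω, v⟫ / (1:ℝ) ^ 2) • ω‖ ≤ 2 := by
    rw [one_pow]
    calc ‖v - (⟪ω, v⟫ / 1) • ω‖ ≤ ‖v‖ + ‖(⟪ω, v⟫ / 1) • ω‖ := norm_sub_le _ _
    _ = ‖v‖ + |⟪ω, v⟫| := by rw [norm_smul, hω, Real.norm_eq_abs, mul_one, div_one]
    _ ≤ ν + ν := add_le_add hv habs
    _ ≤ 2 := by linarith
  calc ‖(2 / ((1:ℝ) ^ 2 * (1 - ⟪ω, v⟫ / 1)))‖ * ‖v - (⟪ω, v⟫ / (1:ℝ) ^ 2) • ω‖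
      ≤ (2 / (1 - ν)) * 2 := by
        apply mul_le_mul h1 h2 (norm_nonneg _) (by positivity)
    _ = 4 / (1 - ν) := by ring


/-- Interior-of-the-light-cone estimate from the proof of Lemma A.2: for `|x| ≤ (1-ρ)s`
the oscillatory integral decays like `1/(ρ s)`, uniformly in both cutoffs. -/
theorem statement2 (ν ρ κ : ℝ) (hν0 : 0 < ν) (hν1 : ν < 1) (hρ0 : 0 < ρ) (hρ1 : ρ < 1)
    (hκ : 0 < κ) :
    ∃ C : ℝ, ∀ v : E3, ‖v‖ ≤ ν → ∀ σ κ' : ℝ, 0 < σ → σ < κ' → κ' ≤ κ →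
      ∀ s : ℝ, 0 < s → ∀ x : E3, ‖x‖ ≤ (1 - ρ) * s → ∀ l : Fin 3,
      |∫ k in annulus σ κ', (Sig v k) l * Real.cos (⟪k, x⟫ - ‖k‖ * s)| ≤
        C / (ρ * s) := by
  classical
  have hd : (0:ℝ) < 1 - ν := by linarith
  set M : ℝ := 4 / (1 - ν) with hMdef
  have hM0 : (0:ℝ) ≤ M := by positivity
  set ms := (volume : Measure E3).toSphere with hms
  refine ⟨(ms Set.univ).toReal * (2 * M), ?_⟩
  intro v hv σ κ' hσ hσκ hκ' s hs x hx l
  have hρs : (0:ℝ) < ρ * s := mul_pos hρ0 hs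
  -- basic objects
  set f : E3 → ℝ := fun k => (Sig v k) l * Real.cos (⟪k, x⟫ - ‖k‖ * s) with hf
  have hannm : MeasurableSet (annulus σ κ') := by
    have : annulus σ κ' = (fun k : E3 => ‖k‖) ⁻¹' (Set.Icc σ κ') := rfl
    rw [this]
    exact continuous_norm.measurable measurableSet_Icc
  set g : E3 → ℝ := (annulus σ κ').indicator f with hg
  have hfmeas : Measurable f := by
    apply Measurable.mul
    · exact (EuclideanSpace.proj l).continuous.measurable.comp (Sig_meas v)
    · exact Real.continuous_cos.measurable.comp
        ((continuous_id.inner continuous_const).sub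
          (continuous_norm.mul continuous_const)).measurable
  have hgmeas : Measurable g := hfmeas.indicator hannm
  -- the phase speed on the sphere
  set a : Metric.sphere (0:E3) 1 → ℝ := fun ω => ⟪(ω : E3), x⟫ - s with ha
  have hωnorm : ∀ ω : Metric.sphere (0:E3) 1, ‖(ω : E3)‖ = 1 := fun ω =>
    mem_sphere_zero_iff_norm.1 ω.2
  have ha_neg : ∀ ω, a ω ≤ -(ρ * s) := by
    intro ω
    have h1 : ⟪(ω : E3), x⟫ ≤ ‖x‖ := by
      calc ⟪(ω : E3), x⟫ ≤ ‖(ω : E3)‖ * ‖x‖ := real_inner_le_norm _ _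
      _ = ‖x‖ := by rw [hωnorm ω, one_mul]
    simp only [ha]
    linarith
  have ha_ne : ∀ ω, a ω ≠ 0 := fun ω => by
    have := ha_neg ω; intro h; rw [h] at this; linarith
  have ha_abs : ∀ ω, ρ * s ≤ |a ω| := fun ω => by
    rw [abs_of_neg (by linarith [ha_neg ω])]
    linarith [ha_neg ω]
  -- membership of r • ω in the annulus
  have hmem : ∀ (ω : Metric.sphere (0:E3) 1) (r : ℝ), 0 < r →
      ((r • (ω:E3)) ∈ annulus σ κ' ↔ r ∈ Set.Icc σ κ') := by
    intro ω r hr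
    have : ‖r • (ω:E3)‖ = r := by
      rw [norm_smul, hωnorm ω, Real.norm_eq_abs, abs_of_pos hr, mul_one]
    constructor
    · rintro ⟨h1, h2⟩; rw [this] at h1 h2; exact ⟨h1, h2⟩
    · rintro ⟨h1, h2⟩; exact ⟨by rw [this]; exact h1, by rw [this]; exact h2⟩
  -- the function after polar change of variables
  set G : Metric.sphere (0:E3) 1 × Set.Ioi (0:ℝ) → ℝ :=
    fun p => g ((p.2 : ℝ) • (p.1 : E3)) with hG
  -- value of f at r • ω
  have hfval : ∀ (ω : Metric.sphere (0:E3) 1) (r : ℝ), 0 < r →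
      f (r • (ω:E3)) = r⁻¹ ^ 2 * ((Sig v ω) l * Real.cos (r * a ω)) := by
    intro ω r hr
    have hcos : ⟪r • (ω:E3), x⟫ - ‖r • (ω:E3)‖ * s = r * a ω := by
      rw [real_inner_smul_left, norm_smul, hωnorm ω, Real.norm_eq_abs, abs_of_pos hr,
        mul_one, ha]
      ring
    simp only [hf, hcos, Sig_smul v (ω:E3) (hωnorm ω) hr]
    have : (r⁻¹ ^ 2 • Sig v (ω:E3)) l = r⁻¹ ^ 2 * (Sig v (ω:E3)) l := rfl
    rw [this]
    ring
  -- key pointwise identity for the inner integrand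
  set h : Metric.sphere (0:E3) 1 → ℝ → ℝ := fun ω t =>
    (Set.Icc σ κ').indicator (fun t' => (Sig v ω) l * Real.cos (t' * a ω)) t with hh
  have hkey : ∀ (ω : Metric.sphere (0:E3) 1) (r : ℝ), 0 < r →
      r ^ 2 * g (r • (ω:E3)) = h ω r := by
    intro ω r hr
    by_cases hrmem : r ∈ Set.Icc σ κ'
    · rw [hh]
      simp only [hg]
      rw [Set.indicator_of_mem ((hmem ω r hr).2 hrmem), Set.indicator_of_mem hrmem,
        hfval ω r hr]
      have : r ≠ 0 := ne_of_gt hr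
      field_simp
    · rw [hh]
      simp only [hg]
      rw [Set.indicator_of_notMem (fun hc => hrmem ((hmem ω r hr).1 hc)),
        Set.indicator_of_notMem hrmem, mul_zero]
  -- bound on the sphere values
  have hSigbd : ∀ ω : Metric.sphere (0:E3) 1, |(Sig v ω) l| ≤ M := fun ω =>
    (abs_coord_le _ l).trans (Sig_norm_le hν1 v hv _ (hωnorm ω))
  -- step 1 : set integral to full integral
  have step1 : ∫ k in annulus σ κ', f k = ∫ k, g k := (integral_indicator hannm).symm
  -- step 2 : full integral to integral over the complement of 0
  have step2 : ∫ q : ({0}ᶜ : Set E3), g ↑q ∂(Measure.comap Subtype.val volume)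
      = ∫ k, g k := by
    rw [integral_subtype_comap (measurableSet_singleton (0:E3)).compl g,
      restrict_compl_singleton]
  -- step 3 : polar coordinates
  have hmp := (volume : Measure E3).measurePreserving_homeomorphUnitSphereProd
  have hdim : Module.finrank ℝ E3 - 1 = 2 := by
    rw [finrank_euclideanSpace_fin]
  rw [hdim] at hmp
  have step3 : ∫ q : ({0}ᶜ : Set E3), g ↑q ∂(Measure.comap Subtype.val volume)
      = ∫ p, G p ∂(ms.prod (Measure.volumeIoiPow 2)) := by
    rw [← hmp.integral_comp (Homeomorph.measurableEmbedding _) G]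
    refine integral_congr_ae (Filter.Eventually.of_forall fun q => ?_)
    show g ↑q = G (homeomorphUnitSphereProd E3 q)
    simp only [hG, homeomorphUnitSphereProd_apply_fst_coe,
      homeomorphUnitSphereProd_apply_snd_coe]
    rw [smul_inv_smul₀ (norm_ne_zero_iff.2 q.2)]
  -- integrability of G
  have hSsetm : MeasurableSet ({r : Set.Ioi (0:ℝ) | (r:ℝ) ≤ κ'}) :=
    measurable_subtype_coe measurableSet_Iic
  set S : Set (Metric.sphere (0:E3) 1 × Set.Ioi (0:ℝ)) :=
    Set.univ ×ˢ {r : Set.Ioi (0:ℝ) | (r:ℝ) ≤ κ'} with hSdef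
  have hSmeas : MeasurableSet S := MeasurableSet.univ.prod hSsetm
  set K : ℝ := σ⁻¹ ^ 2 * M with hK
  have hK0 : 0 ≤ K := by positivity
  have hGmeas : Measurable G := by
    apply hgmeas.comp
    exact ((continuous_subtype_val.comp continuous_snd).smul
      (continuous_subtype_val.comp continuous_fst)).measurable
  have hGbd : ∀ p, ‖G p‖ ≤ S.indicator (fun _ => K) p := by
    rintro ⟨ω, r⟩
    have hr : (0:ℝ) < r := r.2
    by_cases hmem' : ((r:ℝ) • (ω:E3)) ∈ annulus σ κ'
    · have hrI : (r:ℝ) ∈ Set.Icc σ κ' := (hmem ω r hr).1 hmem'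
      have hpS : ((ω, r) : Metric.sphere (0:E3) 1 × Set.Ioi (0:ℝ)) ∈ S :=
        ⟨Set.mem_univ _, hrI.2⟩
      rw [Set.indicator_of_mem hpS]
      show ‖g ((r:ℝ) • (ω:E3))‖ ≤ K
      rw [hg, Set.indicator_of_mem hmem', Real.norm_eq_abs, hfval ω r hr]
      have h1 : |(r:ℝ)⁻¹ ^ 2| ≤ σ⁻¹ ^ 2 := by
        rw [abs_of_nonneg (by positivity)]
        have : (r:ℝ)⁻¹ ≤ σ⁻¹ := inv_anti₀ hσ hrI.1
        exact pow_le_pow_left₀ (by positivity) this 2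
      have h2 : |(Sig v ω) l * Real.cos ((r:ℝ) * a ω)| ≤ M := by
        rw [abs_mul]
        calc |(Sig v ω) l| * |Real.cos ((r:ℝ) * a ω)| ≤ M * 1 :=
              mul_le_mul (hSigbd ω) (Real.abs_cos_le_one _) (abs_nonneg _) hM0
          _ = M := mul_one M
      rw [abs_mul]
      exact mul_le_mul h1 h2 (abs_nonneg _) (by positivity)
    · show ‖g ((r:ℝ) • (ω:E3))‖ ≤ _
      rw [hg, Set.indicator_of_notMem hmem', norm_zero]
      exact Set.indicator_nonneg (fun _ _ => hK0) _
  have hSfin : (ms.prod (Measure.volumeIoiPow 2)) S < ⊤ := by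
    rw [hSdef, Measure.prod_prod]
    apply ENNReal.mul_lt_top (measure_lt_top ms _)
    calc (Measure.volumeIoiPow 2) {r : Set.Ioi (0:ℝ) | (r:ℝ) ≤ κ'}
        ≤ (Measure.volumeIoiPow 2)
            (Set.Iio (⟨κ' + 1, Set.mem_Ioi.2 (by linarith)⟩ : Set.Ioi (0:ℝ))) := by
          apply measure_mono
          intro r hr
          have : (r:ℝ) ≤ κ' := hr
          show r < (⟨κ' + 1, _⟩ : Set.Ioi (0:ℝ))
          rw [← Subtype.coe_lt_coe]
          simpa using lt_of_le_of_lt this (lt_add_one κ')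
      _ < ⊤ := by
          rw [Measure.volumeIoiPow_apply_Iio]
          exact ENNReal.ofReal_lt_top
  have hGint : Integrable G (ms.prod (Measure.volumeIoiPow 2)) := by
    refine Integrable.mono' ?_ hGmeas.aestronglyMeasurable
      (Filter.Eventually.of_forall hGbd)
    exact (integrableOn_const hSfin.ne).integrable_indicator hSmeas
  -- inner integral
  have hinner : ∀ ω : Metric.sphere (0:E3) 1,
      ∫ r : Set.Ioi (0:ℝ), G (ω, r) ∂(Measure.volumeIoiPow 2)
        = (Sig v ω) l * ((a ω)⁻¹ * (Real.sin (κ' * a ω) - Real.sin (σ * a ω))) := by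
    intro ω
    have hmeasd : Measurable fun r : Set.Ioi (0:ℝ) => ((r:ℝ) ^ 2).toNNReal :=
      (measurable_subtype_coe.pow_const 2).real_toNNReal
    have e1 : ∫ r : Set.Ioi (0:ℝ), G (ω, r) ∂(Measure.volumeIoiPow 2)
        = ∫ t in Set.Ioi (0:ℝ), ((t ^ 2).toNNReal : NNReal) • g (t • (ω:E3)) := by
      rw [show (Measure.volumeIoiPow 2)
          = Measure.withDensity (Measure.comap Subtype.val volume)
            (fun r : Set.Ioi (0:ℝ) => ENNReal.ofReal ((r:ℝ) ^ 2)) from rfl]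
      simp only [ENNReal.ofReal]
      rw [integral_withDensity_eq_integral_smul hmeasd (fun r => G (ω, r))]
      exact integral_subtype_comap measurableSet_Ioi
        (fun t : ℝ => ((t ^ 2).toNNReal : NNReal) • g (t • (ω:E3)))
    rw [e1]
    have e2 : ∫ t in Set.Ioi (0:ℝ), ((t ^ 2).toNNReal : NNReal) • g (t • (ω:E3))
        = ∫ t in Set.Ioi (0:ℝ), h ω t := by
      refine setIntegral_congr_fun measurableSet_Ioi fun t ht => ?_
      have ht' : (0:ℝ) < t := ht
      rw [NNReal.smul_def, Real.coe_toNNReal _ (sq_nonneg t), ← hkey ω t ht']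
      rfl
    rw [e2]
    have hsub : Set.Icc σ κ' ⊆ Set.Ioi (0:ℝ) := fun t ht => lt_of_lt_of_le hσ ht.1
    have e3 : ∫ t in Set.Ioi (0:ℝ), h ω t
        = ∫ t in Set.Icc σ κ', (Sig v ω) l * Real.cos (t * a ω) := by
      rw [← integral_indicator measurableSet_Ioi]
      simp only [hh]
      rw [Set.indicator_indicator, Set.inter_eq_self_of_subset_right hsub,
        integral_indicator measurableSet_Icc]
    rw [e3, integral_Icc_eq_integral_Ioc, ← intervalIntegral.integral_of_le hσκ.le,
      intervalIntegral.integral_const_mul,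
      intervalIntegral.integral_comp_mul_right Real.cos (ha_ne ω),
      integral_cos, smul_eq_mul]
  -- assembling everything
  have hmain : ∫ k in annulus σ κ', f k
      = ∫ ω, (Sig v ω) l * ((a ω)⁻¹ * (Real.sin (κ' * a ω) - Real.sin (σ * a ω))) ∂ms := by
    rw [step1, ← step2, step3, integral_prod G hGint]
    exact integral_congr_ae (Filter.Eventually.of_forall hinner)
  have hbound : ∀ ω : Metric.sphere (0:E3) 1,
      ‖(Sig v ω) l * ((a ω)⁻¹ * (Real.sin (κ' * a ω) - Real.sin (σ * a ω)))‖
        ≤ M * (2 / (ρ * s)) := by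
    intro ω
    rw [Real.norm_eq_abs, abs_mul]
    have hb2 : |(a ω)⁻¹ * (Real.sin (κ' * a ω) - Real.sin (σ * a ω))| ≤ 2 / (ρ * s) := by
      rw [abs_mul, abs_inv]
      have hsin : |Real.sin (κ' * a ω) - Real.sin (σ * a ω)| ≤ 2 := by
        calc |Real.sin (κ' * a ω) - Real.sin (σ * a ω)|
            ≤ |Real.sin (κ' * a ω)| + |Real.sin (σ * a ω)| := abs_sub _ _
          _ ≤ 1 + 1 := add_le_add (Real.abs_sin_le_one _) (Real.abs_sin_le_one _)
          _ = 2 := by norm_num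
      have hainv : |a ω|⁻¹ ≤ (ρ * s)⁻¹ := inv_anti₀ hρs (ha_abs ω)
      calc |a ω|⁻¹ * |Real.sin (κ' * a ω) - Real.sin (σ * a ω)|
          ≤ (ρ * s)⁻¹ * 2 := mul_le_mul hainv hsin (abs_nonneg _) (by positivity)
        _ = 2 / (ρ * s) := by rw [div_eq_mul_inv]; ring
    exact mul_le_mul (hSigbd ω) hb2 (abs_nonneg _) hM0
  have hfinal : |∫ k in annulus σ κ', f k| ≤ (M * (2 / (ρ * s))) * (ms Set.univ).toReal := by
    rw [hmain, ← Real.norm_eq_abs]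
    exact norm_integral_le_of_norm_le_const (Filter.Eventually.of_forall hbound)
  calc |∫ k in annulus σ κ', f k| ≤ (M * (2 / (ρ * s))) * (ms Set.univ).toReal := hfinal
    _ = (ms Set.univ).toReal * (2 * M) / (ρ * s) := by
        field_simp

end
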